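/- Let b₁, b₂, b₃ > 0 be real numbers with b₁ ≠ b₃ and b₂ ≠ b₃. Define the refined Hilbert series of the conifold H(t₁,t₂,t₃) = t₁t₂(1−t₃)/((1−t₁)(1−t₂)(t₁−t₃)(t₂−t₃)) and set G(q) = H(e^{−b₁q}, e^{−b₂q}, e^{−b₃q}) for q > 0. Then as q → 0⁺, q³·G(q) tends to b₃/(b₁(b₁−b₃)(b₂² − b₂b₃)) = b₃/(b₁b₂(b₁−b₃)(b₂−b₃)). (This identifies the leading Laurent coefficient V₃ of the conifold Hilbert series as a function of the Reeb vector, in agreement with the volume function of the conifold's Sasaki–Einstein horizon.) -/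

import Mathlib

open Filter Topology

private lemma exp_diff_slope (a b : ℝ) :
    Tendsto (fun q : ℝ => (Real.exp (-a * q) - Real.exp (-b * q)) / q)
      (𝓝[>] 0) (𝓝 (b - a)) := by
  have h1 : HasDerivAt (fun q : ℝ => -a * q) (-a) 0 := by
    simpa using (hasDerivAt_id (0 : ℝ)).const_mul (-a)
  have h2 : HasDerivAt (fun q : ℝ => -b * q) (-b) 0 := by
    simpa using (hasDerivAt_id (0 : ℝ)).const_mul (-b)
  have h3 := (h1.exp).sub (h2.exp)
  have hval : Real.exp (-a * 0) * -a - Real.exp (-b * 0) * -b = b - a := by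
    simp only [mul_zero, Real.exp_zero, one_mul]
    ring
  rw [hval] at h3
  have h4 := hasDerivAt_iff_tendsto_slope.mp h3
  have h5 := h4.mono_left (nhdsWithin_mono _ (fun x hx => ne_of_gt hx))
  refine h5.congr fun q => ?_
  simp [slope_fun_def, div_eq_inv_mul]

private lemma conifold_alg (t₁ t₂ t₃ q : ℝ) (hq : q ≠ 0) (e1 : 1 - t₁ ≠ 0)
    (e2 : 1 - t₂ ≠ 0) (e13 : t₁ - t₃ ≠ 0) (e23 : t₂ - t₃ ≠ 0) :
    t₁ * t₂ * ((1 - t₃) / q) *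
        (((1 - t₁) / q)⁻¹ * ((1 - t₂) / q)⁻¹ * ((t₁ - t₃) / q)⁻¹ * ((t₂ - t₃) / q)⁻¹)
      = q ^ 3 * (t₁ * t₂ * (1 - t₃) / ((1 - t₁) * (1 - t₂) * (t₁ - t₃) * (t₂ - t₃))) := by
  field_simp

/-- For positive reals `b₁, b₂, b₃` with `b₁ ≠ b₃` and `b₂ ≠ b₃`,
let `H(t₁,t₂,t₃) = t₁t₂(1−t₃)/((1−t₁)(1−t₂)(t₁−t₃)(t₂−t₃))` be the refined Hilbert
series of the conifold, and set `G(q) = H(e^{−b₁q}, e^{−b₂q}, e^{−b₃q})` for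
`q > 0`.  Then, as `q → 0⁺`,
`q³·G(q) → b₃/(b₁(b₁−b₃)(b₂²−b₂b₃)) = b₃/(b₁b₂(b₁−b₃)(b₂−b₃))`. -/
theorem reeb_leading_coefficient_conifold (b₁ b₂ b₃ : ℝ)
    (h₁ : 0 < b₁) (h₂ : 0 < b₂) (h₃ : 0 < b₃)
    (h₁₃ : b₁ ≠ b₃) (h₂₃ : b₂ ≠ b₃)
    (H : ℝ → ℝ → ℝ → ℝ)
    (hH : ∀ t₁ t₂ t₃ : ℝ, H t₁ t₂ t₃ =
      t₁ * t₂ * (1 - t₃) / ((1 - t₁) * (1 - t₂) * (t₁ - t₃) * (t₂ - t₃)))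
    (G : ℝ → ℝ)
    (hG : ∀ q : ℝ, G q =
      H (Real.exp (-b₁ * q)) (Real.exp (-b₂ * q)) (Real.exp (-b₃ * q))) :
    b₃ / (b₁ * (b₁ - b₃) * (b₂ ^ 2 - b₂ * b₃))
        = b₃ / (b₁ * b₂ * (b₁ - b₃) * (b₂ - b₃)) ∧
      Tendsto (fun q : ℝ => q ^ 3 * G q) (𝓝[>] 0)
        (𝓝 (b₃ / (b₁ * b₂ * (b₁ - b₃) * (b₂ - b₃)))) := by
  constructor
  · congr 1
    ring
  · have hEcont : ∀ b : ℝ, Tendsto (fun q : ℝ => Real.exp (-b * q)) (𝓝[>] 0) (𝓝 1) := by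
      intro b
      have hc : Continuous fun q : ℝ => Real.exp (-b * q) :=
        Real.continuous_exp.comp (continuous_const.mul continuous_id)
      have := hc.tendsto 0
      rw [show Real.exp (-b * 0) = 1 by simp] at this
      exact this.mono_left nhdsWithin_le_nhds
    have h03 : Tendsto (fun q : ℝ => (1 - Real.exp (-b₃ * q)) / q) (𝓝[>] 0) (𝓝 b₃) := by
      have h := exp_diff_slope 0 b₃
      rw [sub_zero] at h
      refine h.congr fun q => ?_
      norm_num
    have h01 : Tendsto (fun q : ℝ => (1 - Real.exp (-b₁ * q)) / q) (𝓝[>] 0) (𝓝 b₁) := by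
      have h := exp_diff_slope 0 b₁
      rw [sub_zero] at h
      refine h.congr fun q => ?_
      norm_num
    have h02 : Tendsto (fun q : ℝ => (1 - Real.exp (-b₂ * q)) / q) (𝓝[>] 0) (𝓝 b₂) := by
      have h := exp_diff_slope 0 b₂
      rw [sub_zero] at h
      refine h.congr fun q => ?_
      norm_num
    have h13 := exp_diff_slope b₁ b₃
    have h23 := exp_diff_slope b₂ b₃
    have n13 : b₃ - b₁ ≠ 0 := sub_ne_zero.mpr (Ne.symm h₁₃)
    have n23 : b₃ - b₂ ≠ 0 := sub_ne_zero.mpr (Ne.symm h₂₃)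
    have hft : Tendsto (fun q : ℝ =>
        Real.exp (-b₁ * q) * Real.exp (-b₂ * q) * ((1 - Real.exp (-b₃ * q)) / q) *
          (((1 - Real.exp (-b₁ * q)) / q)⁻¹ * ((1 - Real.exp (-b₂ * q)) / q)⁻¹ *
            ((Real.exp (-b₁ * q) - Real.exp (-b₃ * q)) / q)⁻¹ *
            ((Real.exp (-b₂ * q) - Real.exp (-b₃ * q)) / q)⁻¹)) (𝓝[>] 0)
        (𝓝 (1 * 1 * b₃ * (b₁⁻¹ * b₂⁻¹ * (b₃ - b₁)⁻¹ * (b₃ - b₂)⁻¹))) :=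
      (((hEcont b₁).mul (hEcont b₂)).mul h03).mul
        ((((h01.inv₀ h₁.ne').mul (h02.inv₀ h₂.ne')).mul
          (h13.inv₀ n13)).mul (h23.inv₀ n23))
    have hinv : b₁⁻¹ * b₂⁻¹ * (b₃ - b₁)⁻¹ * (b₃ - b₂)⁻¹
        = (b₁ * b₂ * (b₁ - b₃) * (b₂ - b₃))⁻¹ := by
      rw [← mul_inv, ← mul_inv, ← mul_inv]
      congr 1
      ring
    have hval : 1 * 1 * b₃ * (b₁⁻¹ * b₂⁻¹ * (b₃ - b₁)⁻¹ * (b₃ - b₂)⁻¹)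
        = b₃ / (b₁ * b₂ * (b₁ - b₃) * (b₂ - b₃)) := by
      rw [hinv, div_eq_mul_inv]
      ring
    rw [hval] at hft
    refine hft.congr' ?_
    filter_upwards [self_mem_nhdsWithin] with q hq
    have hq0 : (0 : ℝ) < q := hq
    have hqne : q ≠ 0 := hq0.ne'
    have e1 : 1 - Real.exp (-b₁ * q) ≠ 0 := by
      have hlt : Real.exp (-b₁ * q) < 1 := Real.exp_lt_one_iff.mpr (by nlinarith)
      intro h; nlinarith
    have e2 : 1 - Real.exp (-b₂ * q) ≠ 0 := by
      have hlt : Real.exp (-b₂ * q) < 1 := Real.exp_lt_one_iff.mpr (by nlinarith)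
      intro h; nlinarith
    have e13 : Real.exp (-b₁ * q) - Real.exp (-b₃ * q) ≠ 0 := by
      intro h
      have he := Real.exp_eq_exp.mp (sub_eq_zero.mp h)
      have : b₁ * q = b₃ * q := by linarith
      exact h₁₃ (mul_right_cancel₀ hqne this)
    have e23 : Real.exp (-b₂ * q) - Real.exp (-b₃ * q) ≠ 0 := by
      intro h
      have he := Real.exp_eq_exp.mp (sub_eq_zero.mp h)
      have : b₂ * q = b₃ * q := by linarith
      exact h₂₃ (mul_right_cancel₀ hqne this)
    rw [hG, hH]
    exact conifold_alg _ _ _ q hqne e1 e2 e13 e23
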